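/- Let Φ and Ψ be two completely positive maps on M_N(ℂ), both self-adjoint with respect to the KMS inner product. Let Φ(A) = Σ_{j=1}^M V_j* A V_j be a minimal Kraus representation of Φ in which each V_j satisfies σ^{−1/2} V_j σ^{1/2} = V_j*. Then Φ − Ψ is completely positive if and only if there exists a real M×M matrix T with 0 ≤ T ≤ 1 (as a self-adjoint matrix) such that Ψ(A) = Σ_{i,j=1}^M T_{i,j} V_i* A V_j for all A. -/

import Mathlib

open MeasureTheory Matrix
open scoped ComplexOrder

noncomputable section

/-- The algebra of `N × N` complex matrices. -/
abbrev Mat (N : ℕ) := Matrix (Fin N) (Fin N) ℂ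

variable {N : ℕ}

/-- Real power `σ^s` of a positive definite matrix, defined via the spectral decomposition. -/
noncomputable def mpow (σ : Mat N) (hσ : σ.PosDef) (s : ℝ) : Mat N :=
  (hσ.1.eigenvectorUnitary : Mat N) *
    Matrix.diagonal (fun i => ((hσ.1.eigenvalues i ^ s : ℝ) : ℂ)) *
    star (hσ.1.eigenvectorUnitary : Mat N)

/-- Complete positivity of a linear map on `M_N(ℂ)`: existence of a Kraus representation. -/
def IsCP (Φ : Mat N →ₗ[ℂ] Mat N) : Prop :=
  ∃ (M : ℕ) (V : Fin M → Mat N), ∀ A, Φ A = ∑ j, (V j)ᴴ * A * V j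

/-- The KMS inner product `⟨B,A⟩_KMS = Tr[Bᴴ σ^{1/2} A σ^{1/2}]`. -/
def kmsInner (σ : Mat N) (hσ : σ.PosDef) (B A : Mat N) : ℂ :=
  (Bᴴ * mpow σ hσ (1/2) * A * mpow σ hσ (1/2)).trace

/-- Self-adjointness with respect to the KMS inner product. -/
def IsKMSSelfAdjoint (σ : Mat N) (hσ : σ.PosDef) (Φ : Mat N →ₗ[ℂ] Mat N) : Prop :=
  ∀ A B, kmsInner σ hσ B (Φ A) = kmsInner σ hσ (Φ B) A

/-! ### Auxiliary lemmas -/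

lemma mpow_mul_mpow (σ : Mat N) (hσ : σ.PosDef) (s t : ℝ) :
    mpow σ hσ s * mpow σ hσ t = mpow σ hσ (s + t) := by
  unfold mpow
  have h1 : (star (hσ.1.eigenvectorUnitary : Mat N)) * (hσ.1.eigenvectorUnitary : Mat N) = 1 :=
    Unitary.coe_star_mul_self _
  have collapse : ∀ X : Mat N,
      star (hσ.1.eigenvectorUnitary : Mat N) * ((hσ.1.eigenvectorUnitary : Mat N) * X) = X := by
    intro X; rw [← Matrix.mul_assoc, h1, Matrix.one_mul]
  have h2 : Matrix.diagonal (fun i => ((hσ.1.eigenvalues i ^ s : ℝ) : ℂ)) *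
      Matrix.diagonal (fun i => ((hσ.1.eigenvalues i ^ t : ℝ) : ℂ)) =
      Matrix.diagonal (fun i => ((hσ.1.eigenvalues i ^ (s + t) : ℝ) : ℂ)) := by
    rw [Matrix.diagonal_mul_diagonal]
    apply congrArg Matrix.diagonal
    funext i
    rw [← Complex.ofReal_mul, ← Real.rpow_add (hσ.eigenvalues_pos i)]
  simp only [Matrix.mul_assoc]
  rw [collapse, ← Matrix.mul_assoc (Matrix.diagonal _), h2]

lemma mpow_zero' (σ : Mat N) (hσ : σ.PosDef) : mpow σ hσ 0 = 1 := by
  unfold mpow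
  have : (fun i => ((hσ.1.eigenvalues i ^ (0:ℝ) : ℝ) : ℂ)) = fun _ => (1:ℂ) := by
    funext i; simp [Real.rpow_zero]
  rw [this]
  simp only [Matrix.diagonal_one, Matrix.mul_one]
  exact Unitary.coe_mul_star_self _

lemma mpow_conjTranspose (σ : Mat N) (hσ : σ.PosDef) (s : ℝ) :
    (mpow σ hσ s)ᴴ = mpow σ hσ s := by
  unfold mpow
  rw [Matrix.conjTranspose_mul, Matrix.conjTranspose_mul, Matrix.diagonal_conjTranspose]
  simp only [Matrix.star_eq_conjTranspose, Matrix.conjTranspose_conjTranspose]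
  rw [Matrix.mul_assoc]
  congr 2
  funext i
  simp [Pi.star_def]

variable {M : ℕ}

/-- The Choi matrix of a linear map on matrices. -/
def choiM (Φ : Mat N →ₗ[ℂ] Mat N) : Matrix (Fin N × Fin N) (Fin N × Fin N) ℂ :=
  fun x y => Φ (Matrix.single x.1 y.1 1) x.2 y.2

/-- The matrix whose columns are the (conjugated, vectorized) Kraus operators. -/
def Umat (V : Fin M → Mat N) : Matrix (Fin N × Fin N) (Fin M) ℂ :=
  fun x m => star (V m x.1 x.2)

lemma entry_conjT_mul_std_mul (X Y : Mat N) (i j k l : Fin N) :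
    (Xᴴ * Matrix.single i j (1:ℂ) * Y) k l = star (X i k) * Y j l := by
  simp [Matrix.mul_apply, Matrix.conjTranspose_apply, Matrix.single,
    ite_and, mul_ite, ite_mul, mul_zero, zero_mul, mul_one,
    Finset.sum_ite_eq, Finset.sum_ite_eq']

lemma choiM_kraus {m : ℕ} (Φ : Mat N →ₗ[ℂ] Mat N) (W : Fin m → Mat N)
    (h : ∀ A, Φ A = ∑ j, (W j)ᴴ * A * W j) :
    choiM Φ = Umat W * (Umat W)ᴴ := by
  ext x y
  show Φ (Matrix.single x.1 y.1 1) x.2 y.2 = _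
  rw [h, Matrix.mul_apply, Matrix.sum_apply]
  apply Finset.sum_congr rfl
  intro m' _
  rw [entry_conjT_mul_std_mul]
  simp [Umat]

lemma choiM_psd_of_kraus {m : ℕ} (Φ : Mat N →ₗ[ℂ] Mat N) (W : Fin m → Mat N)
    (h : ∀ A, Φ A = ∑ j, (W j)ᴴ * A * W j) : (choiM Φ).PosSemidef := by
  rw [choiM_kraus Φ W h]
  exact Matrix.posSemidef_self_mul_conjTranspose _

lemma reconstruct (Φ : Mat N →ₗ[ℂ] Mat N) (A : Mat N) (k l : Fin N) :
    Φ A k l = ∑ i, ∑ j, A i j * choiM Φ (i, k) (j, l) := by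
  conv_lhs => rw [Matrix.matrix_eq_sum_single A]
  rw [map_sum]
  rw [Matrix.sum_apply]
  apply Finset.sum_congr rfl
  intro i _
  rw [map_sum, Matrix.sum_apply]
  apply Finset.sum_congr rfl
  intro j _
  have : Matrix.single i j (A i j) = A i j • Matrix.single i j (1:ℂ) := by
    rw [Matrix.smul_single, smul_eq_mul, mul_one]
  rw [this, _root_.map_smul, Matrix.smul_apply, smul_eq_mul]
  rfl

lemma choiM_sub (Φ Ψ : Mat N →ₗ[ℂ] Mat N) : choiM (Φ - Ψ) = choiM Φ - choiM Ψ := by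
  ext x y
  show (Φ - Ψ) (Matrix.single x.1 y.1 1) x.2 y.2 = _
  rw [LinearMap.sub_apply]
  rfl

lemma quad_transfer {m : ℕ} (U : Matrix (Fin N × Fin N) (Fin m) ℂ)
    (S : Matrix (Fin m) (Fin m) ℂ) (x : Fin N × Fin N → ℂ) :
    star x ⬝ᵥ (U * S * Uᴴ) *ᵥ x = star (Uᴴ *ᵥ x) ⬝ᵥ S *ᵥ (Uᴴ *ᵥ x) := by
  rw [← Matrix.mulVec_mulVec, ← Matrix.mulVec_mulVec, Matrix.dotProduct_mulVec (star x) U,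
    Matrix.star_mulVec, Matrix.conjTranspose_conjTranspose]

lemma Umat_mulVec_eq_zero (V : Fin M → Mat N) (hmin : LinearIndependent ℂ V)
    (c : Fin M → ℂ) (h : Umat V *ᵥ c = 0) : c = 0 := by
  have key : ∑ m, star (c m) • V m = 0 := by
    ext a b
    have h1 := congrFun h (a, b)
    simp only [Matrix.mulVec, dotProduct, Umat, Pi.zero_apply] at h1
    have h2 := congrArg star h1
    rw [star_zero, star_sum] at h2
    rw [Matrix.sum_apply, Matrix.zero_apply]
    rw [← h2]
    apply Finset.sum_congr rfl
    intro m _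
    simp [mul_comm]
  have := (Fintype.linearIndependent_iff.mp hmin) (fun m => star (c m)) key
  funext m
  have := this m
  simpa using congrArg star this

lemma Umat_cancel (V : Fin M → Mat N) (hmin : LinearIndependent ℂ V)
    (c : Matrix (Fin M) (Fin M) ℂ) (h : Umat V * c * (Umat V)ᴴ = 0) : c = 0 := by
  set U := Umat V
  set G : Matrix (Fin M) (Fin M) ℂ := Uᴴ * U with hG
  -- G is invertible
  have hdet : G.det ≠ 0 := by
    intro hd
    obtain ⟨v, hv0, hv⟩ := (Matrix.exists_mulVec_eq_zero_iff).mpr hd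
    apply hv0
    apply Umat_mulVec_eq_zero V hmin
    have hq : star v ⬝ᵥ G *ᵥ v = 0 := by rw [hv, dotProduct_zero]
    have e1 : star v ⬝ᵥ G *ᵥ v = star (U *ᵥ v) ⬝ᵥ (U *ᵥ v) := by
      rw [hG, ← Matrix.mulVec_mulVec, Matrix.dotProduct_mulVec, Matrix.star_mulVec]
    rw [e1] at hq
    exact dotProduct_star_self_eq_zero.mp hq
  have hGinv : G⁻¹ * G = 1 := Matrix.nonsing_inv_mul G (isUnit_iff_ne_zero.mpr hdet)
  have hGinv2 : G * G⁻¹ = 1 := Matrix.mul_nonsing_inv G (isUnit_iff_ne_zero.mpr hdet)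
  have h2 : Uᴴ * (U * c * Uᴴ) * U = G * c * G := by
    simp only [hG, Matrix.mul_assoc]
  have h3 : G * c * G = 0 := by rw [← h2, h, Matrix.mul_zero, Matrix.zero_mul]
  have h4 : G⁻¹ * (G * c * G) * G⁻¹ = c := by
    simp only [Matrix.mul_assoc]
    rw [hGinv2, Matrix.mul_one, ← Matrix.mul_assoc, hGinv, Matrix.one_mul]
  rw [← h4, h3, Matrix.mul_zero, Matrix.zero_mul]

lemma linmap_ext (Φ₁ Φ₂ : Mat N →ₗ[ℂ] Mat N)
    (h : ∀ a b, Φ₁ (Matrix.single a b 1) = Φ₂ (Matrix.single a b 1)) :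
    ∀ A, Φ₁ A = Φ₂ A := by
  intro A
  conv_lhs => rw [Matrix.matrix_eq_sum_single A]
  conv_rhs => rw [Matrix.matrix_eq_sum_single A]
  rw [map_sum, map_sum]
  refine Finset.sum_congr rfl fun a _ => ?_
  rw [map_sum, map_sum]
  refine Finset.sum_congr rfl fun b _ => ?_
  have e : Matrix.single a b (A a b) = A a b • Matrix.single a b 1 := by
    rw [Matrix.smul_single, smul_eq_mul, mul_one]
  rw [e, _root_.map_smul, _root_.map_smul, h]

/-- The linear map `A ↦ ∑ c i j • Vᵢᴴ A Vⱼ`. -/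
def sumMap (V : Fin M → Mat N) (c : Matrix (Fin M) (Fin M) ℂ) : Mat N →ₗ[ℂ] Mat N :=
  ∑ i, ∑ j, c i j • ((LinearMap.mulLeft ℂ ((V i)ᴴ)).comp (LinearMap.mulRight ℂ (V j)))

lemma sumMap_apply (V : Fin M → Mat N) (c : Matrix (Fin M) (Fin M) ℂ) (A : Mat N) :
    sumMap V c A = ∑ i, ∑ j, c i j • ((V i)ᴴ * A * V j) := by
  simp [sumMap, LinearMap.sum_apply, mul_assoc]

lemma choiM_sumMap (V : Fin M → Mat N) (c : Matrix (Fin M) (Fin M) ℂ) :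
    choiM (sumMap V c) = Umat V * c * (Umat V)ᴴ := by
  ext x y
  show sumMap V c (Matrix.single x.1 y.1 1) x.2 y.2 = _
  rw [sumMap_apply]
  simp only [Matrix.sum_apply, Matrix.smul_apply, entry_conjT_mul_std_mul, smul_eq_mul]
  simp only [Matrix.mul_apply, Matrix.conjTranspose_apply, Umat, Finset.sum_mul, star_star]
  rw [Finset.sum_comm]
  refine Finset.sum_congr rfl fun i _ => Finset.sum_congr rfl fun j _ => ?_
  ring

lemma rep_of_choi_eq (Ψ : Mat N →ₗ[ℂ] Mat N) (V : Fin M → Mat N)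
    (c : Matrix (Fin M) (Fin M) ℂ) (h : choiM Ψ = Umat V * c * (Umat V)ᴴ) :
    ∀ A, Ψ A = ∑ i, ∑ j, c i j • ((V i)ᴴ * A * V j) := by
  have hc : choiM Ψ = choiM (sumMap V c) := by rw [h, choiM_sumMap]
  have hb : ∀ a b, Ψ (Matrix.single a b 1) = sumMap V c (Matrix.single a b 1) := by
    intro a b
    ext k l
    exact congrFun (congrFun hc (a, k)) (b, l)
  intro A
  rw [linmap_ext Ψ (sumMap V c) hb A, sumMap_apply]

lemma sumform_zero (V : Fin M → Mat N) (hmin : LinearIndependent ℂ V)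
    (c : Matrix (Fin M) (Fin M) ℂ)
    (h : ∀ B, ∑ i, ∑ j, c i j • ((V i)ᴴ * B * (V j)) = (0 : Mat N)) : c = 0 := by
  apply Umat_cancel V hmin
  rw [← choiM_sumMap]
  ext x y
  show sumMap V c (Matrix.single x.1 y.1 1) x.2 y.2 = _
  rw [sumMap_apply, h]
  simp

lemma eq_zero_of_trace_mul (X : Mat N) (h : ∀ C : Mat N, (X * C).trace = 0) : X = 0 := by
  ext i j
  have h1 := h (Matrix.single j i 1)
  simp only [Matrix.trace, Matrix.diag, Matrix.mul_apply, Matrix.single, Matrix.of_apply,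
    ite_and, mul_ite, mul_one, mul_zero, Finset.sum_ite_eq, Finset.sum_ite_eq',
    Finset.mem_univ, if_true] at h1
  simpa using h1

lemma sum_smul_kraus_sub (V : Fin M → Mat N) (T : Matrix (Fin M) (Fin M) ℝ) (A : Mat N) :
    (∑ j, (V j)ᴴ * A * V j) - (∑ i, ∑ j, ((T i j : ℝ) : ℂ) • ((V i)ᴴ * A * V j))
      = ∑ i, ∑ j, (((1 - T) i j : ℝ) : ℂ) • ((V i)ᴴ * A * V j) := by
  have h1 : (∑ j, (V j)ᴴ * A * V j)
      = ∑ i, ∑ j, (((1 : Matrix (Fin M) (Fin M) ℝ) i j : ℝ) : ℂ) • ((V i)ᴴ * A * V j) := by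
    refine Finset.sum_congr rfl fun i _ => ?_
    rw [Finset.sum_eq_single i]
    · simp [Matrix.one_apply_eq]
    · intro j _ hji
      simp [Matrix.one_apply_ne (Ne.symm hji)]
    · intro h; exact absurd (Finset.mem_univ i) h
  rw [h1, ← Finset.sum_sub_distrib]
  refine Finset.sum_congr rfl fun i _ => ?_
  rw [← Finset.sum_sub_distrib]
  refine Finset.sum_congr rfl fun j _ => ?_
  rw [← sub_smul]
  congr 1
  rw [Matrix.sub_apply, Complex.ofReal_sub]

lemma kraus_quad_expand (V : Fin M → Mat N) (R : Matrix (Fin M) (Fin M) ℝ) (A : Mat N) :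
    ∑ k, (∑ i, ((R k i : ℝ) : ℂ) • V i)ᴴ * A * (∑ j, ((R k j : ℝ) : ℂ) • V j)
      = ∑ i, ∑ j, (((∑ k, R k i * R k j : ℝ)) : ℂ) • ((V i)ᴴ * A * V j) := by
  have hterm : ∀ k, (∑ i, ((R k i : ℝ) : ℂ) • V i)ᴴ * A * (∑ j, ((R k j : ℝ) : ℂ) • V j)
      = ∑ i, ∑ j, ((R k i * R k j : ℝ) : ℂ) • ((V i)ᴴ * A * V j) := by
    intro k
    simp only [Matrix.conjTranspose_sum, Matrix.conjTranspose_smul, Matrix.sum_mul,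
      Matrix.mul_sum, smul_mul_assoc, mul_smul_comm, smul_smul, Finset.smul_sum]
    rw [Finset.sum_comm]
    refine Finset.sum_congr rfl fun i _ => Finset.sum_congr rfl fun j _ => ?_
    congr 1
    simp [RCLike.star_def, Complex.conj_ofReal, Complex.ofReal_mul, mul_comm]
  rw [Finset.sum_congr rfl (fun k _ => hterm k), Finset.sum_comm]
  refine Finset.sum_congr rfl fun i _ => ?_
  rw [Finset.sum_comm]
  refine Finset.sum_congr rfl fun j _ => ?_
  rw [← Finset.sum_smul]
  congr 1
  push_cast
  rfl

open scoped MatrixOrder in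
lemma psd_real_eq_conjTranspose_mul_self {m : ℕ} {A : Matrix (Fin m) (Fin m) ℝ}
    (hA : A.PosSemidef) : ∃ R : Matrix (Fin m) (Fin m) ℝ, A = Rᴴ * R :=
  CStarAlgebra.nonneg_iff_eq_star_mul_self.mp hA.nonneg

set_option maxHeartbeats 2000000 in
/-- Radon–Nikodym theorem for KMS self-adjoint CP maps: if `Φ, Ψ` are CP and
KMS self-adjoint and `Φ(A) = Σ_j Vⱼᴴ A Vⱼ` is a minimal Kraus representation with each
`Vⱼ` satisfying `σ^{-1/2} Vⱼ σ^{1/2} = Vⱼᴴ`, then `Φ - Ψ` is CP iff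
`Ψ(A) = Σ_{i,j} T_{ij} Vᵢᴴ A Vⱼ` for some real matrix `T` with `0 ≤ T ≤ 1`. -/
theorem kms_radon_nikodym (N : ℕ) (hN : 2 ≤ N) (σ : Mat N) (hσ : σ.PosDef)
    (htr : σ.trace = 1) (Φ Ψ : Mat N →ₗ[ℂ] Mat N)
    (hΦcp : IsCP Φ) (hΦsa : IsKMSSelfAdjoint σ hσ Φ)
    (hΨcp : IsCP Ψ) (hΨsa : IsKMSSelfAdjoint σ hσ Ψ)
    (M : ℕ) (V : Fin M → Mat N) (hmin : LinearIndependent ℂ V)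
    (hV : ∀ j, mpow σ hσ (-(1/2)) * V j * mpow σ hσ (1/2) = (V j)ᴴ)
    (hrep : ∀ A, Φ A = ∑ j, (V j)ᴴ * A * V j) :
    IsCP (Φ - Ψ) ↔
      ∃ T : Matrix (Fin M) (Fin M) ℝ, T.PosSemidef ∧ (1 - T).PosSemidef ∧
        ∀ A, Ψ A = ∑ i, ∑ j, (T i j : ℂ) • ((V i)ᴴ * A * V j) := by
  constructor
  · intro hcp
    obtain ⟨m1, W1, hW1⟩ := hcp
    obtain ⟨m2, W2, hW2⟩ := hΨcp
    have hCΦ : choiM Φ = Umat V * (Umat V)ᴴ := choiM_kraus Φ V hrep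
    have hCΨ : (choiM Ψ).PosSemidef := choiM_psd_of_kraus Ψ W2 hW2
    have hCD : (choiM (Φ - Ψ)).PosSemidef := choiM_psd_of_kraus _ W1 hW1
    have hsub : choiM (Φ - Ψ) = Umat V * (Umat V)ᴴ - choiM Ψ := by
      rw [choiM_sub, hCΦ]
    set U : Matrix (Fin N × Fin N) (Fin M) ℂ := Umat V with hU
    set G : Matrix (Fin M) (Fin M) ℂ := Uᴴ * U with hGdef
    have hdet : G.det ≠ 0 := by
      intro hd
      obtain ⟨v, hv0, hv⟩ := (Matrix.exists_mulVec_eq_zero_iff).mpr hd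
      apply hv0
      apply Umat_mulVec_eq_zero V hmin
      have hq : star v ⬝ᵥ G *ᵥ v = 0 := by rw [hv, dotProduct_zero]
      have e1 : star v ⬝ᵥ G *ᵥ v = star (U *ᵥ v) ⬝ᵥ (U *ᵥ v) := by
        rw [hGdef, ← Matrix.mulVec_mulVec, Matrix.dotProduct_mulVec, Matrix.star_mulVec]
      rw [e1] at hq
      rw [hU] at hq
      exact dotProduct_star_self_eq_zero.mp hq
    have hdetu : IsUnit G.det := isUnit_iff_ne_zero.mpr hdet
    have hGinv : G⁻¹ * G = 1 := Matrix.nonsing_inv_mul G hdetu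
    have hGinv2 : G * G⁻¹ = 1 := Matrix.mul_nonsing_inv G hdetu
    have hGH : Gᴴ = G := by
      rw [hGdef, Matrix.conjTranspose_mul, Matrix.conjTranspose_conjTranspose]
    have hGiH : (G⁻¹)ᴴ = G⁻¹ := by rw [Matrix.conjTranspose_nonsing_inv, hGH]
    have key : ∀ z, Uᴴ *ᵥ z = 0 → choiM Ψ *ᵥ z = 0 := by
      intro z hz
      have hΦ0 : star z ⬝ᵥ (U * Uᴴ) *ᵥ z = 0 := by
        rw [← Matrix.mulVec_mulVec, hz, Matrix.mulVec_zero, dotProduct_zero]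
      have h1 : star z ⬝ᵥ choiM Ψ *ᵥ z + star z ⬝ᵥ choiM (Φ - Ψ) *ᵥ z = 0 := by
        rw [hsub, Matrix.sub_mulVec, dotProduct_sub]
        linear_combination hΦ0
      have a1 := hCΨ.dotProduct_mulVec_nonneg z
      have a2 := hCD.dotProduct_mulVec_nonneg z
      have h2 : star z ⬝ᵥ choiM Ψ *ᵥ z = 0 := by
        have hle : star z ⬝ᵥ choiM Ψ *ᵥ z ≤ 0 := by
          have e : star z ⬝ᵥ choiM Ψ *ᵥ z = - (star z ⬝ᵥ choiM (Φ - Ψ) *ᵥ z) := by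
            linear_combination h1
          rw [e]
          exact neg_nonpos.mpr a2
        exact le_antisymm hle a1
      exact (hCΨ.dotProduct_mulVec_zero_iff z).mp h2
    set P : Matrix (Fin N × Fin N) (Fin N × Fin N) ℂ := U * G⁻¹ * Uᴴ with hPdef
    have hUP : Uᴴ * (1 - P) = 0 := by
      have e : Uᴴ * (U * G⁻¹ * Uᴴ) = Uᴴ := by
        calc Uᴴ * (U * G⁻¹ * Uᴴ) = (Uᴴ * U) * (G⁻¹ * Uᴴ) := by simp only [Matrix.mul_assoc]
          _ = Uᴴ := by rw [← hGdef, ← Matrix.mul_assoc, hGinv2, Matrix.one_mul]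
      rw [hPdef, Matrix.mul_sub, Matrix.mul_one, e, sub_self]
    have hA1 : choiM Ψ * (1 - P) = 0 := by
      ext x y
      have hz : Uᴴ *ᵥ (fun k => (1 - P) k y) = 0 := by
        funext i
        have h := congrFun (congrFun hUP i) y
        simpa [Matrix.mul_apply, Matrix.mulVec, dotProduct] using h
      have h := congrFun (key _ hz) x
      simpa [Matrix.mul_apply, Matrix.mulVec, dotProduct] using h
    have hA2 : choiM Ψ = choiM Ψ * P := by
      have h := hA1
      rw [Matrix.mul_sub, Matrix.mul_one, sub_eq_zero] at h
      exact h
    have hPH : Pᴴ = P := by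
      rw [hPdef, Matrix.conjTranspose_mul, Matrix.conjTranspose_mul, hGiH,
        Matrix.conjTranspose_conjTranspose]
      simp only [Matrix.mul_assoc]
    have hA3 : choiM Ψ = P * choiM Ψ := by
      calc choiM Ψ = (choiM Ψ)ᴴ := hCΨ.1.eq.symm
        _ = (choiM Ψ * P)ᴴ := by rw [← hA2]
        _ = Pᴴ * (choiM Ψ)ᴴ := Matrix.conjTranspose_mul _ _
        _ = P * choiM Ψ := by rw [hPH, hCΨ.1.eq]
    set Tc : Matrix (Fin M) (Fin M) ℂ := G⁻¹ * (Uᴴ * choiM Ψ * U) * G⁻¹ with hTcdef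
    have hfact : choiM Ψ = U * Tc * Uᴴ := by
      calc choiM Ψ = P * (choiM Ψ * P) := by rw [← hA2, ← hA3]
        _ = U * Tc * Uᴴ := by rw [hPdef, hTcdef]; simp only [Matrix.mul_assoc]
    have hTcH : Tcᴴ = Tc := by
      rw [hTcdef]
      simp only [Matrix.conjTranspose_mul, hGiH, Matrix.conjTranspose_conjTranspose,
        hCΨ.1.eq, Matrix.mul_assoc]
    have hTcPSD : Tc.PosSemidef := by
      have e : Tc = (U * G⁻¹)ᴴ * choiM Ψ * (U * G⁻¹) := by
        rw [Matrix.conjTranspose_mul, hGiH, hTcdef]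
        simp only [Matrix.mul_assoc]
      rw [e]
      exact hCΨ.conjTranspose_mul_mul_same _
    have hDfact : choiM (Φ - Ψ) = U * (1 - Tc) * Uᴴ := by
      rw [hsub, hfact, Matrix.mul_sub, Matrix.sub_mul, Matrix.mul_one]
    have h1TcH : (1 - Tc)ᴴ = 1 - Tc := by
      rw [Matrix.conjTranspose_sub, Matrix.conjTranspose_one, hTcH]
    have h1TcPSD : (1 - Tc).PosSemidef := by
      refine .of_dotProduct_mulVec_nonneg h1TcH fun y => ?_
      have hx : Uᴴ *ᵥ (U *ᵥ (G⁻¹ *ᵥ y)) = y := by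
        rw [Matrix.mulVec_mulVec, Matrix.mulVec_mulVec, ← hGdef, hGinv2, Matrix.one_mulVec]
      calc (0:ℂ) ≤ star (U *ᵥ (G⁻¹ *ᵥ y)) ⬝ᵥ choiM (Φ - Ψ) *ᵥ (U *ᵥ (G⁻¹ *ᵥ y)) := hCD.dotProduct_mulVec_nonneg _
        _ = star y ⬝ᵥ (1 - Tc) *ᵥ y := by rw [hDfact, quad_transfer, hx]
    have hΨC : ∀ A, Ψ A = ∑ i, ∑ j, Tc i j • ((V i)ᴴ * A * V j) := by
      apply rep_of_choi_eq Ψ V Tc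
      rw [← hU]
      exact hfact
    -- reality of Tc via KMS self-adjointness
    set ss : Mat N := mpow σ hσ (1/2) with hsdef
    set ss' : Mat N := mpow σ hσ (-(1/2)) with hs'def
    have hss' : ss * ss' = 1 := by
      have e : (1/2 : ℝ) + (-(1/2)) = 0 := by norm_num
      rw [hsdef, hs'def, mpow_mul_mpow, e, mpow_zero']
    have hs's : ss' * ss = 1 := by
      have e : (-(1/2) : ℝ) + (1/2) = 0 := by norm_num
      rw [hsdef, hs'def, mpow_mul_mpow, e, mpow_zero']
    have hVs : ∀ j, V j * ss = ss * (V j)ᴴ := by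
      intro j
      calc V j * ss = (ss * ss') * (V j * ss) := by rw [hss', Matrix.one_mul]
        _ = ss * (ss' * V j * ss) := by simp only [Matrix.mul_assoc]
        _ = ss * (V j)ᴴ := by rw [hV j]
    have claim1 : ∀ (A B : Mat N) (i j : Fin M),
        (Bᴴ * ss * ((V i)ᴴ * A * V j) * ss).trace
          = (((V j)ᴴ * Bᴴ * V i) * (ss * (A * ss))).trace := by
      intro A B i j
      have e : Bᴴ * ss * ((V i)ᴴ * A * V j) * ss = (Bᴴ * V i * (ss * (A * ss))) * (V j)ᴴ := by
        simp only [Matrix.mul_assoc]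
        rw [hVs j, ← Matrix.mul_assoc ss ((V i)ᴴ), ← hVs i]
        simp only [Matrix.mul_assoc]
      rw [e, Matrix.trace_mul_comm]
      congr 1
      simp only [Matrix.mul_assoc]
    have claim2 : ∀ (A B : Mat N), kmsInner σ hσ B (Ψ A)
        = ∑ i, ∑ j, Tc i j * (((V j)ᴴ * Bᴴ * V i) * (ss * (A * ss))).trace := by
      intro A B
      simp only [kmsInner, ← hsdef]
      rw [hΨC A]
      simp only [Matrix.mul_sum, Matrix.sum_mul, mul_smul_comm, smul_mul_assoc,
        Matrix.trace_sum, Matrix.trace_smul, smul_eq_mul]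
      refine Finset.sum_congr rfl fun i _ => Finset.sum_congr rfl fun j _ => ?_
      congr 1
      exact claim1 A B i j
    have claim3 : ∀ (A B : Mat N), kmsInner σ hσ (Ψ B) A
        = ∑ i, ∑ j, star (Tc i j) * (((V j)ᴴ * Bᴴ * V i) * (ss * (A * ss))).trace := by
      intro A B
      simp only [kmsInner, ← hsdef]
      rw [hΨC B]
      simp only [Matrix.conjTranspose_sum, Matrix.conjTranspose_smul, Matrix.conjTranspose_mul,
        Matrix.conjTranspose_conjTranspose]
      simp only [Matrix.mul_sum, Matrix.sum_mul, mul_smul_comm, smul_mul_assoc,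
        Matrix.trace_sum, Matrix.trace_smul, smul_eq_mul]
      refine Finset.sum_congr rfl fun i _ => Finset.sum_congr rfl fun j _ => ?_
      congr 2
      simp only [Matrix.mul_assoc]
    have hzero : ∀ (A B : Mat N),
        ((∑ i, ∑ j, (Tc i j - star (Tc i j)) • ((V j)ᴴ * Bᴴ * V i)) * (ss * (A * ss))).trace
          = 0 := by
      intro A B
      have h := hΨsa A B
      rw [claim2, claim3] at h
      simp only [Matrix.sum_mul, Matrix.trace_sum, smul_mul_assoc, Matrix.trace_smul,
        smul_eq_mul, sub_mul, Finset.sum_sub_distrib]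
      rw [sub_eq_zero]
      exact h
    have hF0 : ∀ B : Mat N, (∑ i, ∑ j, (Tc i j - star (Tc i j)) • ((V j)ᴴ * Bᴴ * V i)) = 0 := by
      intro B
      apply eq_zero_of_trace_mul
      intro C
      have h := hzero (ss' * (C * ss')) B
      have e : ss * ((ss' * (C * ss')) * ss) = C := by
        simp only [Matrix.mul_assoc]
        rw [hs's, Matrix.mul_one, ← Matrix.mul_assoc, hss', Matrix.one_mul]
      rwa [e] at h
    have hctr : Matrix.of (fun i j => Tc j i - star (Tc j i)) = (0 : Matrix (Fin M) (Fin M) ℂ) := by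
      apply sumform_zero V hmin
      intro C
      have h := hF0 Cᴴ
      simp only [Matrix.conjTranspose_conjTranspose] at h
      rw [Finset.sum_comm]
      exact h
    have hTreal : ∀ i j, star (Tc i j) = Tc i j := by
      intro i j
      have h := congrFun (congrFun hctr j) i
      simp only [Matrix.of_apply, Matrix.zero_apply, sub_eq_zero] at h
      exact h.symm
    have hre : ∀ i j, ((Tc i j).re : ℂ) = Tc i j := by
      intro i j
      have h' : (starRingEnd ℂ) (Tc i j) = Tc i j := hTreal i j
      exact Complex.conj_eq_iff_re.mp h'
    refine ⟨Matrix.of (fun i j => (Tc i j).re), .of_dotProduct_mulVec_nonneg ?_ ?_,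
      .of_dotProduct_mulVec_nonneg ?_ ?_, ?_⟩
    · show (Matrix.of fun i j => (Tc i j).re)ᴴ = _
      ext i j
      have h := congrFun (congrFun hTcH i) j
      simp only [Matrix.conjTranspose_apply] at h ⊢
      simp only [Matrix.of_apply, star_trivial]
      rw [← h, RCLike.star_def, Complex.conj_re]
    · intro x
      have h := hTcPSD.dotProduct_mulVec_nonneg (fun i => (x i : ℂ))
      have e : star (fun i => (x i : ℂ)) ⬝ᵥ Tc *ᵥ (fun i => (x i : ℂ))
          = ((x ⬝ᵥ (Matrix.of fun i j => (Tc i j).re) *ᵥ x : ℝ) : ℂ) := by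
        simp only [dotProduct, Matrix.mulVec, Pi.star_apply, RCLike.star_def,
          Complex.conj_ofReal]
        push_cast
        refine Finset.sum_congr rfl fun i _ => ?_
        rw [Finset.mul_sum, Finset.mul_sum]
        refine Finset.sum_congr rfl fun j _ => ?_
        simp only [Matrix.of_apply]
        rw [hre i j]
      rw [e] at h
      exact Complex.zero_le_real.mp h
    · show (1 - Matrix.of fun i j => (Tc i j).re)ᴴ = _
      ext i j
      have h := congrFun (congrFun hTcH i) j
      simp only [Matrix.conjTranspose_apply] at h
      simp only [Matrix.conjTranspose_apply, Matrix.sub_apply, Matrix.one_apply,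
        Matrix.of_apply, star_trivial]
      have hij : (Tc j i).re = (Tc i j).re := by
        rw [← h, RCLike.star_def, Complex.conj_re]
      rw [hij]
      by_cases hij' : i = j
      · subst hij'; rfl
      · rw [if_neg hij', if_neg (Ne.symm hij')]
    · intro x
      have h := h1TcPSD.dotProduct_mulVec_nonneg (fun i => (x i : ℂ))
      have e : star (fun i => (x i : ℂ)) ⬝ᵥ (1 - Tc) *ᵥ (fun i => (x i : ℂ))
          = ((x ⬝ᵥ (1 - Matrix.of fun i j => (Tc i j).re) *ᵥ x : ℝ) : ℂ) := by
        simp only [dotProduct, Matrix.mulVec, Pi.star_apply, RCLike.star_def,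
          Complex.conj_ofReal]
        push_cast
        refine Finset.sum_congr rfl fun i _ => ?_
        rw [Finset.mul_sum, Finset.mul_sum]
        refine Finset.sum_congr rfl fun j _ => ?_
        simp only [Matrix.sub_apply, Matrix.of_apply, Matrix.one_apply]
        push_cast [apply_ite (fun r : ℝ => (r : ℂ))]
        rw [hre i j]
      rw [e] at h
      exact Complex.zero_le_real.mp h
    · intro A
      rw [hΨC A]
      refine Finset.sum_congr rfl fun i _ => Finset.sum_congr rfl fun j _ => ?_
      rw [Matrix.of_apply, hre]
  · rintro ⟨T, hT, h1T, hform⟩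
    obtain ⟨R, hRR⟩ := psd_real_eq_conjTranspose_mul_self h1T
    refine ⟨M, fun k => ∑ j, ((R k j : ℝ) : ℂ) • V j, fun A => ?_⟩
    rw [LinearMap.sub_apply, hrep, hform A, sum_smul_kraus_sub, kraus_quad_expand]
    refine Finset.sum_congr rfl fun i _ => Finset.sum_congr rfl fun j _ => ?_
    congr 2
    rw [hRR, Matrix.mul_apply]
    refine Finset.sum_congr rfl fun k _ => ?_
    rw [Matrix.conjTranspose_apply, star_trivial]
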